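/- Let d_z ≥ 1, N ≥ 1 be integers and σ_w > 0, σ_max > 0 reals. Let k : ℝ^{d_z} × ℝ^{d_z} → ℝ be a symmetric positive semidefinite kernel with k(z, z) ≤ σ_max for all z. Fix points z_1, …, z_N ∈ ℝ^{d_z}. For t = 1, …, N let σ_{t−1}²(z_t) denote the Gaussian process posterior variance at z_t computed from the first t − 1 points (with σ_0²(z_1) := k(z_1, z_1)), and let K_N be the N×N Gram matrix (K_N)_{ij} = k(z_i, z_j). Then ∑_{t=1}^{N} σ_{t−1}²(z_t) ≤ ( σ_max / log(1 + σ_w⁻² σ_max) ) · log det( I_N + σ_w⁻² K_N ). -/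

import Mathlib

open Matrix

/-- `k` is a symmetric positive semidefinite kernel: every finite Gram matrix is PSD. -/
def IsPSDKernel {E : Type*} (k : E → E → ℝ) : Prop :=
  (∀ z w, k z w = k w z) ∧
    ∀ (m : ℕ) (v : Fin m → E) (c : Fin m → ℝ),
      0 ≤ ∑ i, ∑ j, c i * c j * k (v i) (v j)

/-- The Gram matrix of a kernel at points `zs`. -/
noncomputable def gramMatrix {E : Type*} (k : E → E → ℝ) {m : ℕ} (zs : Fin m → E) :
    Matrix (Fin m) (Fin m) ℝ :=
  Matrix.of fun i j => k (zs i) (zs j)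

/-- The Gaussian process posterior variance at `z` given data points `zs` and
noise variance `σw²`: `σ²(z) = k(z,z) − k_v(z)ᵀ (K + σw² I)⁻¹ k_v(z)`. -/
noncomputable def postVar {E : Type*} (k : E → E → ℝ) (σw : ℝ) {m : ℕ} (zs : Fin m → E)
    (z : E) : ℝ :=
  k z z - (fun i => k (zs i) z) ⬝ᵥ
    ((gramMatrix k zs + σw ^ 2 • (1 : Matrix (Fin m) (Fin m) ℝ))⁻¹ *ᵥ (fun i => k (zs i) z))

lemma gram_quad {E : Type*} (k : E → E → ℝ) {m : ℕ} (v : Fin m → E) (x : Fin m → ℝ) :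
    x ⬝ᵥ (gramMatrix k v *ᵥ x) = ∑ i, ∑ j, x i * x j * k (v i) (v j) := by
  simp only [dotProduct, mulVec, gramMatrix, Matrix.of_apply, Finset.mul_sum]
  exact Finset.sum_congr rfl fun i _ => Finset.sum_congr rfl fun j _ => by ring

lemma gram_psd {E : Type*} {k : E → E → ℝ} (hk : IsPSDKernel k) {m : ℕ} (v : Fin m → E) :
    (gramMatrix k v).PosSemidef := by
  refine posSemidef_iff_dotProduct_mulVec.mpr ⟨?_, ?_⟩
  · ext i j
    simp [gramMatrix, Matrix.conjTranspose_apply, hk.1 (v i) (v j)]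
  · intro x
    have := hk.2 m v x
    simpa [star_trivial, gram_quad k v x] using this

lemma smul_one_posDef {m : ℕ} {σw : ℝ} (hσw : 0 < σw) :
    (σw ^ 2 • (1 : Matrix (Fin m) (Fin m) ℝ)).PosDef := by
  refine posDef_iff_dotProduct_mulVec.mpr ⟨?_, ?_⟩
  · simp [Matrix.IsHermitian, Matrix.conjTranspose_smul]
  · intro x hx
    have hxx : 0 < x ⬝ᵥ x := by
      obtain ⟨i, hi⟩ := Function.ne_iff.mp hx
      have hi' : x i ≠ 0 := hi
      simp only [dotProduct]
      exact Finset.sum_pos' (fun j _ => mul_self_nonneg (x j))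
        ⟨i, Finset.mem_univ i, mul_self_pos.mpr hi'⟩
    have h1 : (σw ^ 2 • (1 : Matrix (Fin m) (Fin m) ℝ)) *ᵥ x = σw ^ 2 • x := by
      simp [Matrix.smul_mulVec]
    simp only [star_trivial, h1, dotProduct_smul, smul_eq_mul]
    positivity

lemma A_posDef {E : Type*} {k : E → E → ℝ} (hk : IsPSDKernel k) {σw : ℝ} (hσw : 0 < σw)
    {m : ℕ} (v : Fin m → E) :
    (gramMatrix k v + σw ^ 2 • (1 : Matrix (Fin m) (Fin m) ℝ)).PosDef :=
  Matrix.PosDef.posSemidef_add (gram_psd hk v) (smul_one_posDef hσw)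


lemma postVar_le {E : Type*} {k : E → E → ℝ} (hk : IsPSDKernel k) {σw : ℝ} (hσw : 0 < σw)
    {m : ℕ} (v : Fin m → E) (z : E) : postVar k σw v z ≤ k z z := by
  have h := ((A_posDef hk hσw v).inv).posSemidef.dotProduct_mulVec_nonneg (fun i => k (v i) z)
  simp only [star_trivial] at h
  unfold postVar
  linarith

lemma postVar_nonneg {E : Type*} {k : E → E → ℝ} (hk : IsPSDKernel k) {σw : ℝ} (hσw : 0 < σw)
    {m : ℕ} (v : Fin m → E) (z : E) : 0 ≤ postVar k σw v z := by
  set A := gramMatrix k v + σw ^ 2 • (1 : Matrix (Fin m) (Fin m) ℝ) with hA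
  set c : Fin m → ℝ := fun i => k (v i) z with hc
  set w : Fin m → ℝ := A⁻¹ *ᵥ c with hw
  have hApd := A_posDef hk hσw v
  have hAw : A *ᵥ w = c := by
    rw [hw, Matrix.mulVec_mulVec, Matrix.mul_nonsing_inv _ (isUnit_iff_isUnit_det _ |>.1 hApd.isUnit), Matrix.one_mulVec]
  set q : ℝ := ∑ i, ∑ j, w i * w j * k (v i) (v j) with hq
  have hS : 0 ≤ q - 2 * (w ⬝ᵥ c) + k z z := by
    have h0 := hk.2 (m + 1) (Fin.snoc v z) (Fin.snoc (fun i => -(w i)) 1)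
    have heq : (∑ i, ∑ j, (Fin.snoc (fun i => -(w i)) 1 : Fin (m+1) → ℝ) i *
        (Fin.snoc (fun i => -(w i)) 1 : Fin (m+1) → ℝ) j *
        k ((Fin.snoc v z : Fin (m+1) → E) i) ((Fin.snoc v z : Fin (m+1) → E) j))
        = q - 2 * (w ⬝ᵥ c) + k z z := by
      simp only [Fin.sum_univ_castSucc, Fin.snoc_castSucc, Fin.snoc_last]
      have hsym : ∀ j, k z (v j) = k (v j) z := fun j => hk.1 z (v j)
      simp only [hsym, Finset.sum_add_distrib, hq, dotProduct, hc, one_mul, mul_one,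
        neg_mul, mul_neg, neg_neg, Finset.sum_neg_distrib]
      ring
    rw [heq] at h0
    exact h0
  have hquad : w ⬝ᵥ (A *ᵥ w) = q + σw ^ 2 * (w ⬝ᵥ w) := by
    rw [hA, Matrix.add_mulVec, dotProduct_add, gram_quad, Matrix.smul_mulVec,
      Matrix.one_mulVec, dotProduct_smul, smul_eq_mul]
  have hwc : w ⬝ᵥ (A *ᵥ w) = w ⬝ᵥ c := by rw [hAw]
  have hww : 0 ≤ w ⬝ᵥ w := Finset.sum_nonneg fun i _ => mul_self_nonneg (w i)
  have hcw : (fun i => k (v i) z) ⬝ᵥ (A⁻¹ *ᵥ (fun i => k (v i) z)) = w ⬝ᵥ c := by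
    rw [dotProduct_comm]
  unfold postVar
  rw [← hA, hcw]
  nlinarith [sq_nonneg σw]

lemma det_step {E : Type*} {k : E → E → ℝ} (hk : IsPSDKernel k) {σw : ℝ} (hσw : 0 < σw)
    {m : ℕ} (v : Fin (m + 1) → E) :
    Matrix.det (gramMatrix k v + σw ^ 2 • (1 : Matrix (Fin (m+1)) (Fin (m+1)) ℝ)) =
      Matrix.det (gramMatrix k (v ∘ Fin.castSucc) + σw ^ 2 • (1 : Matrix (Fin m) (Fin m) ℝ)) *
        (σw ^ 2 + postVar k σw (v ∘ Fin.castSucc) (v (Fin.last m))) := by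
  set z := v (Fin.last m) with hz
  set A := gramMatrix k (v ∘ Fin.castSucc) + σw ^ 2 • (1 : Matrix (Fin m) (Fin m) ℝ) with hA
  set c : Fin m → ℝ := fun i => k (v (Fin.castSucc i)) z with hc
  set B : Matrix (Fin m) (Fin 1) ℝ := Matrix.of fun i _ => c i with hB
  set C : Matrix (Fin 1) (Fin m) ℝ := Matrix.of fun _ j => c j with hC
  set D : Matrix (Fin 1) (Fin 1) ℝ := Matrix.of fun _ _ => k z z + σw ^ 2 with hD
  have hApd := A_posDef hk hσw (v ∘ Fin.castSucc)
  haveI : Invertible A := hApd.isUnit.invertible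
  have hnat : (finSumFinEquiv (Sum.inr (0 : Fin 1)) : Fin (m+1)) = Fin.last m := by
    simp [Fin.ext_iff]
  have hsub : (gramMatrix k v + σw ^ 2 • (1 : Matrix (Fin (m+1)) (Fin (m+1)) ℝ)).submatrix
      finSumFinEquiv finSumFinEquiv = Matrix.fromBlocks A B C D := by
    ext i j
    cases i with
    | inl i =>
      cases j with
      | inl j =>
        simp only [Matrix.submatrix_apply, finSumFinEquiv_apply_left, Matrix.fromBlocks_apply₁₁]
        show (gramMatrix k v + σw ^ 2 • 1) (Fin.castSucc i) (Fin.castSucc j) = A i j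
        simp [hA, gramMatrix, Matrix.one_apply, Fin.castSucc_inj]
      | inr j =>
        obtain rfl : j = 0 := Subsingleton.elim j 0
        simp only [Matrix.submatrix_apply, finSumFinEquiv_apply_left, hnat,
          Matrix.fromBlocks_apply₁₂]
        show (gramMatrix k v + σw ^ 2 • 1) (Fin.castSucc i) (Fin.last m) = B i 0
        simp [hB, hc, hz, gramMatrix, Matrix.one_apply, (Fin.castSucc_lt_last i).ne]
    | inr i =>
      obtain rfl : i = 0 := Subsingleton.elim i 0
      cases j with
      | inl j =>
        simp only [Matrix.submatrix_apply, finSumFinEquiv_apply_left, hnat,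
          Matrix.fromBlocks_apply₂₁]
        show (gramMatrix k v + σw ^ 2 • 1) (Fin.last m) (Fin.castSucc j) = C 0 j
        simp [hC, hc, hz, gramMatrix, Matrix.one_apply, (Fin.castSucc_lt_last j).ne',
          hk.1 (v (Fin.last m)) (v (Fin.castSucc j))]
      | inr j =>
        obtain rfl : j = 0 := Subsingleton.elim j 0
        simp only [Matrix.submatrix_apply, hnat, Matrix.fromBlocks_apply₂₂]
        show (gramMatrix k v + σw ^ 2 • 1) (Fin.last m) (Fin.last m) = D 0 0
        simp [hD, hz, gramMatrix, Matrix.one_apply]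
  have hdet1 : Matrix.det (gramMatrix k v + σw ^ 2 • (1 : Matrix (Fin (m+1)) (Fin (m+1)) ℝ)) =
      Matrix.det (Matrix.fromBlocks A B C D) := by
    rw [← hsub, Matrix.det_submatrix_equiv_self]
  rw [hdet1, Matrix.det_fromBlocks₁₁]
  congr 1
  rw [Matrix.invOf_eq_nonsing_inv, Matrix.det_fin_one]
  have hCB : (C * A⁻¹ * B) 0 0 = c ⬝ᵥ (A⁻¹ *ᵥ c) := by
    simp only [Matrix.mul_apply, Matrix.mulVec, dotProduct, hB, hC, Matrix.of_apply,
      Finset.sum_mul, Finset.mul_sum]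
    rw [Finset.sum_comm]
    exact Finset.sum_congr rfl fun i _ => Finset.sum_congr rfl fun j _ => by ring
  simp only [Matrix.sub_apply, hCB, hD, Matrix.of_apply]
  unfold postVar
  rw [← hA, show (fun i => k ((v ∘ Fin.castSucc) i) z) = c from rfl]
  ring

lemma det_prod {E : Type*} {k : E → E → ℝ} (hk : IsPSDKernel k) {σw : ℝ} (hσw : 0 < σw) :
    ∀ (m : ℕ) (v : Fin m → E),
      Matrix.det (gramMatrix k v + σw ^ 2 • (1 : Matrix (Fin m) (Fin m) ℝ)) =
        ∏ t : Fin m, (σw ^ 2 +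
          postVar k σw (fun i : Fin t.val => v (Fin.castLE t.isLt.le i)) (v t)) := by
  intro m
  induction m with
  | zero => intro v; simp
  | succ n ih =>
    intro v
    rw [det_step hk hσw v, ih (v ∘ Fin.castSucc), Fin.prod_univ_castSucc]
    rfl

lemma chord {c σmax : ℝ} (hc : 0 < c) (hσ : 0 < σmax) {s : ℝ} (h0 : 0 ≤ s) (h1 : s ≤ σmax) :
    s * Real.log (1 + c * σmax) ≤ σmax * Real.log (1 + c * s) := by
  have hcc := strictConcaveOn_log_Ioi.concaveOn
  have hmem1 : (1 : ℝ) ∈ Set.Ioi (0:ℝ) := by norm_num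
  have hmem2 : (1 + c * σmax) ∈ Set.Ioi (0:ℝ) := by
    simp only [Set.mem_Ioi]; nlinarith
  have ha : (0:ℝ) ≤ 1 - s / σmax := by
    rw [sub_nonneg, div_le_one hσ]; exact h1
  have hb : (0:ℝ) ≤ s / σmax := div_nonneg h0 hσ.le
  have hab : (1 - s / σmax) + s / σmax = 1 := by ring
  have h := hcc.2 hmem1 hmem2 ha hb hab
  have key : (1 - s / σmax) • (1:ℝ) + (s / σmax) • (1 + c * σmax) = 1 + c * s := by
    simp only [smul_eq_mul]
    field_simp
    ring
  rw [key, Real.log_one, smul_eq_mul, smul_eq_mul, mul_zero, zero_add] at h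
  have := mul_le_mul_of_nonneg_left h hσ.le
  calc s * Real.log (1 + c * σmax) = σmax * (s / σmax * Real.log (1 + c * σmax)) := by
        field_simp
    _ ≤ σmax * Real.log (1 + c * s) := this

/-- Sum of sequential GP posterior variances is bounded by a multiple of the information gain:
`∑_{t=1}^N σ_{t−1}²(z_t) ≤ (σ_max / log(1 + σ_w⁻² σ_max)) · log det(I + σ_w⁻² K_N)`. -/
theorem stmt_12 (dz N : ℕ) (hdz : 1 ≤ dz) (hN : 1 ≤ N)
    (σw σmax : ℝ) (hσw : 0 < σw) (hσmax : 0 < σmax)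
    (k : EuclideanSpace ℝ (Fin dz) → EuclideanSpace ℝ (Fin dz) → ℝ)
    (hk : IsPSDKernel k)
    (hkbdd : ∀ z : EuclideanSpace ℝ (Fin dz), k z z ≤ σmax)
    (zs : Fin N → EuclideanSpace ℝ (Fin dz)) :
    ∑ t : Fin N, postVar k σw (fun i : Fin t.val => zs (Fin.castLE t.isLt.le i)) (zs t) ≤
      σmax / Real.log (1 + (σw ^ 2)⁻¹ * σmax) *
        Real.log (Matrix.det (1 + (σw ^ 2)⁻¹ • gramMatrix k zs)) := by
  set c : ℝ := (σw ^ 2)⁻¹ with hcdef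
  have hc : 0 < c := by positivity
  set s : Fin N → ℝ := fun t =>
    postVar k σw (fun i : Fin t.val => zs (Fin.castLE t.isLt.le i)) (zs t) with hs
  have hs0 : ∀ t, 0 ≤ s t := fun t => postVar_nonneg hk hσw _ _
  have hs1 : ∀ t, s t ≤ σmax := fun t => (postVar_le hk hσw _ _).trans (hkbdd _)
  have hσw2 : (σw ^ 2 : ℝ) ≠ 0 := by positivity
  -- determinant identity
  have hdet : Matrix.det (1 + c • gramMatrix k zs) = ∏ t, (1 + c * s t) := by
    have h1 : (1 : Matrix (Fin N) (Fin N) ℝ) + c • gramMatrix k zs =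
        c • (gramMatrix k zs + σw ^ 2 • (1 : Matrix (Fin N) (Fin N) ℝ)) := by
      rw [smul_add, smul_smul, hcdef, inv_mul_cancel₀ hσw2, one_smul, add_comm]
    rw [h1, Matrix.det_smul, det_prod hk hσw N zs]
    show c ^ Fintype.card (Fin N) * ∏ t : Fin N, (σw ^ 2 + s t) = ∏ t : Fin N, (1 + c * s t)
    rw [show Fintype.card (Fin N) = (Finset.univ : Finset (Fin N)).card from by simp,
      ← Finset.prod_const,
      ← Finset.prod_mul_distrib]
    refine Finset.prod_congr rfl fun t _ => ?_
    rw [mul_add, hcdef, inv_mul_cancel₀ hσw2]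
  -- logs
  have hfacpos : ∀ t ∈ Finset.univ (α := Fin N), (1 + c * s t) ≠ 0 := by
    intro t _
    have := hs0 t
    nlinarith
  have hlog : Real.log (Matrix.det (1 + c • gramMatrix k zs)) = ∑ t, Real.log (1 + c * s t) := by
    rw [hdet, Real.log_prod hfacpos]
  set L : ℝ := Real.log (1 + c * σmax) with hL
  have hLpos : 0 < L := Real.log_pos (by nlinarith)
  have hterm : ∀ t, s t ≤ σmax / L * Real.log (1 + c * s t) := by
    intro t
    have h := chord hc hσmax (hs0 t) (hs1 t)
    rw [div_mul_eq_mul_div, le_div_iff₀ hLpos, mul_comm (σmax) _, mul_comm (s t) _] at *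
    nlinarith [h]
  calc ∑ t, s t ≤ ∑ t, σmax / L * Real.log (1 + c * s t) :=
        Finset.sum_le_sum fun t _ => hterm t
    _ = σmax / L * ∑ t, Real.log (1 + c * s t) := by rw [Finset.mul_sum]
    _ = σmax / L * Real.log (Matrix.det (1 + c • gramMatrix k zs)) := by rw [hlog]
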